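/- Let μ and ν be finite measures on the real line such that ν(B) ≤ μ(B) for all Borel sets B, and suppose μ((y,z])·ν((x,y]) ≤ μ((x,y])·ν((y,z]) whenever x < y < z. Define f(x) := sup_{a < x} ν((a,x])/μ((a,x]) ∈ [0,1], with the convention 0/0 := 0. Then: f is nondecreasing; f is a density of ν with respect to μ; if μ((x',x]) = 0 for numbers x' < x then f(x') = f(x); if x ∈ ℝ satisfies μ((a,x]) > 0 for all a < x, then f(x) = lim_{a→x−} ν((a,x])/μ((a,x]); and in particular f(x) = ν({x})/μ({x}) whenever μ({x}) > 0. -/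

import Mathlib

open MeasureTheory Set Filter
open scoped ENNReal NNReal Topology

noncomputable section

namespace Stmt16Aux
set_option linter.unusedSectionVars false

/-- The candidate density. -/
def F (μ ν : Measure ℝ) (x : ℝ) : ENNReal := ⨆ a ∈ Iio x, ν (Ioc a x) / μ (Ioc a x)

lemma cross_div_le {a b c d : ℝ≥0∞} (h : a * d ≤ c * b) (hb : b ≠ ∞)
    (hd : d ≠ ∞) (hb0 : b = 0 → a = 0) (hd0 : d = 0 → b = 0) : a / b ≤ c / d := by
  rcases eq_or_ne b 0 with h0 | h0
  · simp [hb0 h0]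
  · have hd' : d ≠ 0 := fun h' => h0 (hd0 h')
    rw [ENNReal.div_le_iff_le_mul (Or.inl h0) (Or.inl hb)]
    calc a ≤ c * b / d := (ENNReal.le_div_iff_mul_le (Or.inl hd') (Or.inl hd)).2 h
      _ = c / d * b := by rw [mul_comm c b, mul_div_assoc, mul_comm]

lemma splitIoc (m : Measure ℝ) {a b c : ℝ} (hab : a ≤ b) (hbc : b ≤ c) :
    m (Ioc a c) = m (Ioc a b) + m (Ioc b c) := by
  rw [← Ioc_union_Ioc_eq_Ioc hab hbc, measure_union (Ioc_disjoint_Ioc_of_le le_rfl) measurableSet_Ioc]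

variable {μ ν : Measure ℝ} [IsFiniteMeasure μ] [IsFiniteMeasure ν]

lemma le' (hle : ν ≤ μ) (s : Set ℝ) : ν s ≤ μ s := Measure.le_iff'.1 hle s

lemma zero' (hle : ν ≤ μ) {s : Set ℝ} (h : μ s = 0) : ν s = 0 :=
  le_antisymm (h ▸ le' hle s) (zero_le)

lemma ratio_le_one (hle : ν ≤ μ) (s t : ℝ) : ν (Ioc s t) / μ (Ioc s t) ≤ 1 :=
  le_trans (ENNReal.div_le_div_right (le' hle _) _) ENNReal.div_self_le_one

lemma F_le_one (hle : ν ≤ μ) (x : ℝ) : F μ ν x ≤ 1 :=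
  iSup₂_le fun a _ => ratio_le_one hle a x

section TP

variable (hle : ν ≤ μ)
  (hTP : ∀ x y z : ℝ, x < y → y < z →
      μ (Ioc y z) * ν (Ioc x y) ≤ μ (Ioc x y) * ν (Ioc y z))
include hle hTP

/-- ratio on (a,x] is at most ratio on (x,y] (when the latter has positive μ). -/
lemma ratio_left_le {a x y : ℝ} (hax : a < x) (hxy : x < y) (hμ : μ (Ioc x y) ≠ 0) :
    ν (Ioc a x) / μ (Ioc a x) ≤ ν (Ioc x y) / μ (Ioc x y) := by
  refine cross_div_le ?_ (measure_ne_top _ _) (measure_ne_top _ _)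
    (fun h => zero' hle h) (fun h => (hμ h).elim)
  calc ν (Ioc a x) * μ (Ioc x y) = μ (Ioc x y) * ν (Ioc a x) := mul_comm _ _
    _ ≤ μ (Ioc a x) * ν (Ioc x y) := hTP a x y hax hxy
    _ = ν (Ioc x y) * μ (Ioc a x) := mul_comm _ _

/-- ratio on (a,x] is at most ratio on (a,y] for x ≤ y. -/
lemma ratio_mono_right {a x y : ℝ} (hax : a < x) (hxy : x ≤ y) :
    ν (Ioc a x) / μ (Ioc a x) ≤ ν (Ioc a y) / μ (Ioc a y) := by
  rcases eq_or_lt_of_le hxy with rfl | h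
  · exact le_rfl
  rw [splitIoc μ hax.le h.le, splitIoc ν hax.le h.le]
  refine cross_div_le ?_ (measure_ne_top _ _) ?_ (fun h0 => zero' hle h0) ?_
  · calc ν (Ioc a x) * (μ (Ioc a x) + μ (Ioc x y))
        = ν (Ioc a x) * μ (Ioc a x) + μ (Ioc x y) * ν (Ioc a x) := by ring
      _ ≤ ν (Ioc a x) * μ (Ioc a x) + μ (Ioc a x) * ν (Ioc x y) :=
          add_le_add_right (hTP a x y hax h) _
      _ = (ν (Ioc a x) + ν (Ioc x y)) * μ (Ioc a x) := by ring
  · exact (ENNReal.add_ne_top).2 ⟨measure_ne_top _ _, measure_ne_top _ _⟩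
  · intro h0
    exact le_antisymm (le_trans (le_add_right le_rfl) h0.le) (zero_le)

/-- ratio on (a,x] is at most ratio on (b,x] for a < b < x, when μ (Ioc b x) ≠ 0. -/
lemma ratio_mono_left {a b x : ℝ} (hab : a < b) (hbx : b < x) (hs : μ (Ioc b x) ≠ 0) :
    ν (Ioc a x) / μ (Ioc a x) ≤ ν (Ioc b x) / μ (Ioc b x) := by
  rw [splitIoc μ hab.le hbx.le, splitIoc ν hab.le hbx.le]
  refine cross_div_le ?_ ?_ (measure_ne_top _ _) ?_ (fun h => (hs h).elim)
  · calc (ν (Ioc a b) + ν (Ioc b x)) * μ (Ioc b x)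
        = μ (Ioc b x) * ν (Ioc a b) + ν (Ioc b x) * μ (Ioc b x) := by ring
      _ ≤ μ (Ioc a b) * ν (Ioc b x) + ν (Ioc b x) * μ (Ioc b x) :=
          add_le_add_left (hTP a b x hab hbx) _
      _ = ν (Ioc b x) * (μ (Ioc a b) + μ (Ioc b x)) := by ring
  · exact (ENNReal.add_ne_top).2 ⟨measure_ne_top _ _, measure_ne_top _ _⟩
  · intro h0
    have h1 : μ (Ioc a b) = 0 := le_antisymm (le_trans (le_add_right le_rfl) h0.le) (zero_le)
    have h2 : μ (Ioc b x) = 0 := le_antisymm (le_trans (le_add_left le_rfl) h0.le) (zero_le)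
    rw [zero' hle h1, zero' hle h2, add_zero]

lemma F_mono : Monotone (F μ ν) := by
  intro x y hxy
  rcases eq_or_lt_of_le hxy with rfl | h
  · exact le_rfl
  refine iSup₂_le fun a ha => ?_
  refine le_trans (ratio_mono_right hle hTP ha h.le) ?_
  rw [F]
  exact le_biSup (fun a => ν (Ioc a y) / μ (Ioc a y)) (show a ∈ Iio y from lt_trans ha h)

lemma F_measurable : Measurable (F μ ν) := (F_mono hle hTP).measurable

/-- Upper bound: ν (Ioc s t) ≤ F t * μ (Ioc s t). -/
lemma nu_le_F_mul {s t : ℝ} (h : s < t) : ν (Ioc s t) ≤ F μ ν t * μ (Ioc s t) := by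
  rcases eq_or_ne (μ (Ioc s t)) 0 with h0 | h0
  · rw [zero' hle h0]; exact zero_le
  · have h1 : ν (Ioc s t) / μ (Ioc s t) ≤ F μ ν t := by
      rw [F]
      exact le_biSup (fun a => ν (Ioc a t) / μ (Ioc a t)) (show s ∈ Iio t from h)
    calc ν (Ioc s t) = ν (Ioc s t) / μ (Ioc s t) * μ (Ioc s t) :=
          (ENNReal.div_mul_cancel h0 (measure_ne_top _ _)).symm
      _ ≤ F μ ν t * μ (Ioc s t) := mul_le_mul_left h1 _

/-- Lower bound: F s * μ (Ioc s t) ≤ ν (Ioc s t). -/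
lemma F_mul_le_nu {s t : ℝ} (h : s < t) : F μ ν s * μ (Ioc s t) ≤ ν (Ioc s t) := by
  rw [F, ENNReal.iSup_mul]
  refine iSup_le fun a => ?_
  rw [ENNReal.iSup_mul]
  refine iSup_le fun (ha : a < s) => ?_
  rcases eq_or_ne (μ (Ioc s t)) 0 with h0 | h0
  · rw [h0, mul_zero]; exact zero_le
  · calc ν (Ioc a s) / μ (Ioc a s) * μ (Ioc s t)
        ≤ ν (Ioc s t) / μ (Ioc s t) * μ (Ioc s t) :=
          mul_le_mul_left (ratio_left_le hle hTP ha h h0) _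
      _ = ν (Ioc s t) := ENNReal.div_mul_cancel h0 (measure_ne_top _ _)

/-- Part 5: F is constant across μ-null intervals. -/
lemma F_eq_of_null {x' x : ℝ} (h : x' < x) (h0 : μ (Ioc x' x) = 0) : F μ ν x' = F μ ν x := by
  refine le_antisymm (F_mono hle hTP h.le) ?_
  refine iSup₂_le fun a (ha : a < x) => ?_
  rcases lt_or_ge a x' with hax' | hx'a
  · have hμ : μ (Ioc a x) = μ (Ioc a x') := by
      rw [splitIoc μ hax'.le h.le, h0, add_zero]
    have hν : ν (Ioc a x) = ν (Ioc a x') := by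
      rw [splitIoc ν hax'.le h.le, zero' hle h0, add_zero]
    rw [hμ, hν, F]
    exact le_biSup (fun a => ν (Ioc a x') / μ (Ioc a x')) (show a ∈ Iio x' from hax')
  · have hμ : μ (Ioc a x) = 0 :=
      le_antisymm (le_trans (measure_mono (Ioc_subset_Ioc_left hx'a)) h0.le) (zero_le)
    rw [zero' hle hμ, hμ, ENNReal.zero_div]
    exact zero_le

end TP

lemma iInter_Ioc_singleton (x : ℝ) : ⋂ n : ℕ, Ioc (x - 1/(n+1)) x = {x} := by
  ext y
  simp only [mem_iInter, mem_Ioc, mem_singleton_iff]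
  constructor
  · intro h
    refine le_antisymm ((h 0).2) ?_
    by_contra hyx
    push_neg at hyx
    obtain ⟨n, hn⟩ := exists_nat_one_div_lt (show (0:ℝ) < x - y by linarith)
    have := (h n).1
    linarith
  · rintro rfl
    refine fun n => ⟨?_, le_rfl⟩
    have : (0:ℝ) < 1/(n+1) := by positivity
    linarith

lemma tendsto_measure_IocL (m : Measure ℝ) [IsFiniteMeasure m] (x : ℝ) :
    Tendsto (fun a => m (Ioc a x)) (𝓝[<] x) (𝓝 (m {x})) := by
  have anti : AntitoneOn (fun a => m (Ioc a x)) (Iio x) :=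
    fun a _ b _ hab => measure_mono (Ioc_subset_Ioc_left hab)
  have h := anti.tendsto_nhdsLT (OrderBot.bddBelow _)
  have key : sInf ((fun a => m (Ioc a x)) '' Iio x) = m {x} := by
    refine le_antisymm ?_ (le_sInf ?_)
    · have h2 : (⨅ n : ℕ, m (Ioc (x - 1/(n+1)) x)) = m {x} := by
        rw [← iInter_Ioc_singleton x]
        refine (Antitone.measure_iInter ?_
          (fun n => (measurableSet_Ioc).nullMeasurableSet) ⟨0, measure_ne_top _ _⟩).symm
        intro i j hij
        apply Ioc_subset_Ioc_left
        have h3 : 1/((j:ℝ)+1) ≤ 1/((i:ℝ)+1) := by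
          apply one_div_le_one_div_of_le
          · positivity
          · have : (i:ℝ) ≤ j := by exact_mod_cast hij
            linarith
        linarith
      rw [← h2]
      refine le_iInf fun n => sInf_le ⟨x - 1/(n+1), ?_, rfl⟩
      have : (0:ℝ) < 1/(n+1) := by positivity
      simp only [mem_Iio]; linarith
    · rintro b ⟨a, (ha : a < x), rfl⟩
      exact measure_mono (by simp [singleton_subset_iff, ha])
  rwa [key] at h

section TP2

variable (hle : ν ≤ μ)
  (hTP : ∀ x y z : ℝ, x < y → y < z →
      μ (Ioc y z) * ν (Ioc x y) ≤ μ (Ioc x y) * ν (Ioc y z))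
include hle hTP

lemma part6 (x : ℝ) (hx : ∀ a : ℝ, a < x → 0 < μ (Ioc a x)) :
    Tendsto (fun a => ν (Ioc a x) / μ (Ioc a x)) (𝓝[<] x) (𝓝 (F μ ν x)) := by
  have mono : MonotoneOn (fun a => ν (Ioc a x) / μ (Ioc a x)) (Iio x) := by
    intro a _ b hb hab
    rcases eq_or_lt_of_le hab with rfl | h
    · exact le_rfl
    · exact ratio_mono_left hle hTP h hb (hx b hb).ne'
  have h := mono.tendsto_nhdsLT (OrderTop.bddAbove _)
  have key : sSup ((fun a => ν (Ioc a x) / μ (Ioc a x)) '' Iio x) = F μ ν x := by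
    rw [sSup_image, F]
  rwa [key] at h

lemma part7 (x : ℝ) (hx : 0 < μ {x}) : F μ ν x = ν {x} / μ {x} := by
  have hx' : ∀ a : ℝ, a < x → 0 < μ (Ioc a x) := fun a ha =>
    lt_of_lt_of_le hx (measure_mono (by simp [singleton_subset_iff, ha]))
  have t1 := part6 hle hTP x hx'
  have t2 : Tendsto (fun a => ν (Ioc a x) / μ (Ioc a x)) (𝓝[<] x) (𝓝 (ν {x} / μ {x})) :=
    ENNReal.Tendsto.div (tendsto_measure_IocL ν x) (Or.inr hx.ne')
      (tendsto_measure_IocL μ x) (Or.inl (measure_ne_top _ _))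
  exact tendsto_nhds_unique t1 t2

lemma atom_formula (t : ℝ) : ν {t} = F μ ν t * μ {t} := by
  rcases eq_or_ne (μ {t}) 0 with h0 | h0
  · rw [zero' hle h0, h0, mul_zero]
  · rw [part7 hle hTP t (zero_lt_iff.2 h0)]
    exact (ENNReal.div_mul_cancel h0 (measure_ne_top _ _)).symm

end TP2

lemma Ioo_eq_iUnion {c d : ℝ} (h : c < d) :
    Ioo c d = ⋃ n : ℕ, Ioc (c + (d-c)/((n:ℝ)+2)) (d - (d-c)/((n:ℝ)+2)) := by
  ext x
  simp only [mem_Ioo, mem_iUnion, mem_Ioc]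
  constructor
  · rintro ⟨hcx, hxd⟩
    set m := min (x - c) (d - x) with hm_def
    have hm : (0:ℝ) < m := lt_min (by linarith) (by linarith)
    obtain ⟨n, hn⟩ := exists_nat_gt ((d - c)/m)
    have h2 : d - c < m * ((n:ℝ) + 2) := by
      rw [div_lt_iff₀ hm] at hn
      nlinarith
    have h1 : (d - c)/((n:ℝ)+2) < m := by
      rw [div_lt_iff₀ (by positivity)]
      linarith
    have hm1 : m ≤ x - c := min_le_left _ _
    have hm2 : m ≤ d - x := min_le_right _ _
    exact ⟨n, by linarith, by linarith⟩
  · rintro ⟨n, h1, h2⟩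
    have hp : (0:ℝ) < (d - c)/((n:ℝ)+2) := div_pos (by linarith) (by positivity)
    constructor <;> linarith

lemma measure_Ioo_eq_iSup (m : Measure ℝ) {c d : ℝ} (h : c < d) :
    m (Ioo c d) = ⨆ n : ℕ, m (Ioc (c + (d-c)/((n:ℝ)+2)) (d - (d-c)/((n:ℝ)+2))) := by
  rw [Ioo_eq_iUnion h]
  refine Directed.measure_iUnion ?_
  refine Monotone.directed_le ?_
  intro i j hij
  have hij' : ((i:ℝ)+2) ≤ ((j:ℝ)+2) := by
    have : (i:ℝ) ≤ j := Nat.cast_le.2 hij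
    linarith
  have key : (d - c)/((j:ℝ)+2) ≤ (d - c)/((i:ℝ)+2) := by
    apply div_le_div_of_nonneg_left (by linarith) (by positivity) hij'
  exact Ioc_subset_Ioc (by linarith) (by linarith)

lemma sum_Ioc (m : Measure ℝ) {c : ℕ → ℝ} (hc : Monotone c) (k : ℕ) :
    m (Ioc (c 0) (c k)) = ∑ i ∈ Finset.range k, m (Ioc (c i) (c (i+1))) := by
  induction k with
  | zero => simp
  | succ k ih =>
      rw [Finset.sum_range_succ, ← ih,
        ← measure_union (Ioc_disjoint_Ioc_of_le le_rfl) measurableSet_Ioc,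
        Ioc_union_Ioc_eq_Ioc (hc (Nat.zero_le k)) (hc (Nat.le_succ k))]

lemma eps_le {A B C : ℝ≥0∞} (hC : C ≠ ∞)
    (h : ∀ n : ℕ, 0 < n → A ≤ B + (n:ℝ≥0∞)⁻¹ * C) : A ≤ B := by
  refine ENNReal.le_of_forall_pos_le_add fun ε hε hB => ?_
  have hden : (ε:ℝ≥0∞) / (C + 1) ≠ 0 := by
    refine (ENNReal.div_pos (by exact_mod_cast hε.ne') (by simp [hC])).ne'
  obtain ⟨n, hn⟩ := ENNReal.exists_inv_nat_lt hden
  have hn0 : 0 < n := by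
    rcases Nat.eq_zero_or_pos n with rfl | h'
    · simp only [Nat.cast_zero, ENNReal.inv_zero] at hn
      exact absurd hn not_top_lt
    · exact h'
  refine (h n hn0).trans ?_
  have h1 : (n:ℝ≥0∞)⁻¹ * C ≤ ((ε:ℝ≥0∞) / (C+1)) * (C+1) :=
    mul_le_mul' hn.le (le_add_right le_rfl)
  rw [ENNReal.div_mul_cancel (by simp) (by simp [hC])] at h1
  exact add_le_add_right h1 B

section TP3

variable (hle : ν ≤ μ)
  (hTP : ∀ x y z : ℝ, x < y → y < z →
      μ (Ioc y z) * ν (Ioc x y) ≤ μ (Ioc x y) * ν (Ioc y z))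
include hle hTP

lemma measure_Ioo_le {c d : ℝ} {v : ℝ≥0∞} (h : c < d)
    (hv : ∀ y, y ∈ Ioo c d → F μ ν y ≤ v) :
    ν (Ioo c d) ≤ v * μ (Ioo c d) := by
  rw [measure_Ioo_eq_iSup ν h]
  refine iSup_le fun n => ?_
  have hp : (0:ℝ) < (d - c)/((n:ℝ)+2) := div_pos (by linarith) (by positivity)
  have he : (d - c)/((n:ℝ)+2) < d - c := by
    rw [div_lt_iff₀ (by positivity)]
    nlinarith
  set q := c + (d-c)/((n:ℝ)+2) with hq
  set r := d - (d-c)/((n:ℝ)+2) with hr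
  have hqIoo : q ∈ Ioo c d := ⟨by rw [hq]; linarith, by rw [hq]; linarith⟩
  have hrIoo : r ∈ Ioo c d := ⟨by rw [hr]; linarith, by rw [hr]; linarith⟩
  rcases le_or_gt r q with hrq | hqr
  · rw [Ioc_eq_empty (not_lt.2 hrq), measure_empty]
    exact zero_le
  · have hsub : Ioc q r ⊆ Ioo c d :=
      fun x hx => ⟨lt_trans hqIoo.1 hx.1, lt_of_le_of_lt hx.2 hrIoo.2⟩
    calc ν (Ioc q r) ≤ F μ ν r * μ (Ioc q r) := nu_le_F_mul hle hTP hqr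
      _ ≤ v * μ (Ioo c d) := mul_le_mul' (hv r hrIoo) (measure_mono hsub)

lemma le_measure_Ioo {c d : ℝ} {u : ℝ≥0∞} (h : c < d)
    (hu : ∀ y, y ∈ Ioo c d → u ≤ F μ ν y) :
    u * μ (Ioo c d) ≤ ν (Ioo c d) := by
  rw [measure_Ioo_eq_iSup μ h, measure_Ioo_eq_iSup ν h, ENNReal.mul_iSup]
  refine iSup_mono fun n => ?_
  have hp : (0:ℝ) < (d - c)/((n:ℝ)+2) := div_pos (by linarith) (by positivity)
  have he : (d - c)/((n:ℝ)+2) < d - c := by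
    rw [div_lt_iff₀ (by positivity)]
    nlinarith
  set q := c + (d-c)/((n:ℝ)+2) with hq
  set r := d - (d-c)/((n:ℝ)+2) with hr
  have hqIoo : q ∈ Ioo c d := ⟨by rw [hq]; linarith, by rw [hq]; linarith⟩
  rcases le_or_gt r q with hrq | hqr
  · rw [Ioc_eq_empty (not_lt.2 hrq), measure_empty, mul_zero]
    exact zero_le
  · calc u * μ (Ioc q r) ≤ F μ ν q * μ (Ioc q r) := mul_le_mul_left (hu q hqIoo) _
      _ ≤ ν (Ioc q r) := F_mul_le_nu hle hTP hqr



end TP3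

section TP3b

variable (hle : ν ≤ μ)
  (hTP : ∀ x y z : ℝ, x < y → y < z →
      μ (Ioc y z) * ν (Ioc x y) ≤ μ (Ioc x y) * ν (Ioc y z))
include hle hTP

lemma key_ineq {a b : ℝ} (hab : a < b) (n : ℕ) (hn : 0 < n) :
    ν (Ioc a b) ≤ μ.withDensity (F μ ν) (Ioc a b) + (n:ℝ≥0∞)⁻¹ * μ (Ioc a b) ∧
    μ.withDensity (F μ ν) (Ioc a b) ≤ ν (Ioc a b) + (n:ℝ≥0∞)⁻¹ * μ (Ioc a b) := by
  set ρ := μ.withDensity (F μ ν) with hρ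
  set u : ℕ → ℝ≥0∞ := fun i => (i : ℝ≥0∞) / (n : ℝ≥0∞) with hu
  set c : ℕ → ℝ :=
    fun i => if i < n then sSup (insert a {x | x ∈ Icc a b ∧ F μ ν x < u i}) else b with hc
  have humono : Monotone u := fun i j hij =>
    ENNReal.div_le_div_right (by exact_mod_cast hij) _
  have hbdd : ∀ i : ℕ, BddAbove (insert a {x | x ∈ Icc a b ∧ F μ ν x < u i}) := by
    intro i
    refine ⟨b, ?_⟩
    rintro y (rfl | ⟨⟨_, hy⟩, _⟩)
    · exact hab.le
    · exact hy
  have hceq : ∀ i : ℕ, i < n →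
      c i = sSup (insert a {x | x ∈ Icc a b ∧ F μ ν x < u i}) := by
    intro i hi
    simp only [hc]
    rw [if_pos hi]
  have hca : ∀ i, a ≤ c i := by
    intro i
    by_cases hi : i < n
    · rw [hceq i hi]
      exact le_csSup (hbdd i) (mem_insert a _)
    · simp only [hc]
      rw [if_neg hi]
      exact hab.le
  have hcb : ∀ i, c i ≤ b := by
    intro i
    by_cases hi : i < n
    · rw [hceq i hi]
      refine csSup_le (insert_nonempty _ _) ?_
      rintro y (rfl | ⟨⟨_, hy⟩, _⟩)
      · exact hab.le
      · exact hy
    · simp only [hc]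
      rw [if_neg hi]
  have hmono : Monotone c := by
    intro i j hij
    by_cases hj : j < n
    · have hi : i < n := lt_of_le_of_lt hij hj
      rw [hceq i hi, hceq j hj]
      refine csSup_le_csSup (hbdd j) (insert_nonempty _ _) ?_
      refine insert_subset_insert ?_
      rintro x ⟨hx1, hx2⟩
      exact ⟨hx1, lt_of_lt_of_le hx2 (humono hij)⟩
    · have hcjb : c j = b := by simp only [hc]; rw [if_neg hj]
      rw [hcjb]
      exact hcb i
  have hc0 : c 0 = a := by
    have he : {x | x ∈ Icc a b ∧ F μ ν x < u 0} = ∅ := by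
      ext x
      simp [hu]
    rw [hceq 0 hn, he]
    simp
  have hcn : c n = b := by simp only [hc]; rw [if_neg (lt_irrefl n)]
  have key1 : ∀ i : ℕ, i < n → ∀ x, x ∈ Ioo (c i) (c (i+1)) → u i ≤ F μ ν x := by
    intro i hi x hx
    by_contra hFx
    push_neg at hFx
    have hxmem : x ∈ insert a {x | x ∈ Icc a b ∧ F μ ν x < u i} :=
      Or.inr ⟨⟨le_trans (hca i) hx.1.le, le_trans hx.2.le (hcb (i+1))⟩, hFx⟩
    have hxle : x ≤ c i := by
      rw [hceq i hi]
      exact le_csSup (hbdd i) hxmem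
    exact absurd hx.1 (not_lt.2 hxle)
  have key2 : ∀ i : ℕ, i < n → ∀ x, x ∈ Ioo (c i) (c (i+1)) → F μ ν x ≤ u (i+1) := by
    intro i hi x hx
    by_cases hi1 : i + 1 < n
    · have hx2 : x < sSup (insert a {x | x ∈ Icc a b ∧ F μ ν x < u (i+1)}) := by
        rw [← hceq (i+1) hi1]
        exact hx.2
      obtain ⟨y, hy, hxy⟩ := exists_lt_of_lt_csSup (insert_nonempty _ _) hx2
      rcases hy with rfl | ⟨-, hy2⟩
      · exact absurd (lt_trans (lt_of_le_of_lt (hca i) hx.1) hxy) (lt_irrefl _)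
      · exact le_trans (F_mono hle hTP hxy.le) hy2.le
    · have hin : i + 1 = n := le_antisymm (Nat.succ_le_of_lt hi) (not_lt.1 hi1)
      have hun : u (i+1) = 1 := by
        rw [hu]
        simp only [hin]
        exact ENNReal.div_self (by exact_mod_cast hn.ne') (by simp)
      rw [hun]
      exact F_le_one hle x
  have hstep : ∀ i : ℕ, u (i+1) = u i + (n:ℝ≥0∞)⁻¹ := by
    intro i
    rw [hu]
    push_cast
    rw [← ENNReal.div_add_div_same, one_div]
  have hρIoo : ∀ s t : ℝ, ρ (Ioo s t) = ∫⁻ x in Ioo s t, F μ ν x ∂μ := fun s t =>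
    withDensity_apply _ measurableSet_Ioo
  have hρsing : ∀ t : ℝ, ρ {t} = F μ ν t * μ {t} := by
    intro t
    rw [hρ, withDensity_apply _ (measurableSet_singleton t), lintegral_singleton]
  have piece : ∀ i : ℕ, i < n →
      ν (Ioc (c i) (c (i+1))) ≤ ρ (Ioc (c i) (c (i+1)))
          + (n:ℝ≥0∞)⁻¹ * μ (Ioc (c i) (c (i+1))) ∧
      ρ (Ioc (c i) (c (i+1))) ≤ ν (Ioc (c i) (c (i+1)))
          + (n:ℝ≥0∞)⁻¹ * μ (Ioc (c i) (c (i+1))) := by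
    intro i hi
    rcases eq_or_lt_of_le (hmono (Nat.le_succ i)) with heq | hlt
    · rw [← heq, Ioc_self]
      simp
    · have hsplit : ∀ m : Measure ℝ,
          m (Ioc (c i) (c (i+1))) = m (Ioo (c i) (c (i+1))) + m {c (i+1)} := by
        intro m
        rw [← Ioo_union_right hlt,
          measure_union (by simp [disjoint_singleton_right]) (measurableSet_singleton _)]
      have hμIoo : μ (Ioo (c i) (c (i+1))) ≤ μ (Ioc (c i) (c (i+1))) :=
        measure_mono Ioo_subset_Ioc_self
      have hatom : ν {c (i+1)} = F μ ν (c (i+1)) * μ {c (i+1)} := atom_formula hle hTP _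
      have hlow : u i * μ (Ioo (c i) (c (i+1))) ≤ ρ (Ioo (c i) (c (i+1))) := by
        rw [hρIoo, ← setLIntegral_const (Ioo (c i) (c (i+1))) (u i)]
        exact setLIntegral_mono' measurableSet_Ioo (fun x hx => key1 i hi x hx)
      have hhigh : ρ (Ioo (c i) (c (i+1))) ≤ u (i+1) * μ (Ioo (c i) (c (i+1))) := by
        rw [hρIoo, ← setLIntegral_const (Ioo (c i) (c (i+1))) (u (i+1))]
        exact setLIntegral_mono' measurableSet_Ioo (fun x hx => key2 i hi x hx)
      constructor
      · rw [hsplit ν, hsplit ρ]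
        calc ν (Ioo (c i) (c (i+1))) + ν {c (i+1)}
            ≤ u (i+1) * μ (Ioo (c i) (c (i+1))) + F μ ν (c (i+1)) * μ {c (i+1)} :=
              add_le_add (measure_Ioo_le hle hTP hlt (key2 i hi)) hatom.le
          _ = (u i * μ (Ioo (c i) (c (i+1))) + F μ ν (c (i+1)) * μ {c (i+1)})
              + (n:ℝ≥0∞)⁻¹ * μ (Ioo (c i) (c (i+1))) := by
              rw [hstep i, add_mul]
              ring
          _ ≤ (ρ (Ioo (c i) (c (i+1))) + ρ {c (i+1)})
              + (n:ℝ≥0∞)⁻¹ * μ (Ioc (c i) (c (i+1))) :=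
              add_le_add (add_le_add hlow (hρsing _).ge) (mul_le_mul_right hμIoo _)
      · rw [hsplit ν, hsplit ρ]
        calc ρ (Ioo (c i) (c (i+1))) + ρ {c (i+1)}
            ≤ u (i+1) * μ (Ioo (c i) (c (i+1))) + F μ ν (c (i+1)) * μ {c (i+1)} :=
              add_le_add hhigh (hρsing _).le
          _ = (u i * μ (Ioo (c i) (c (i+1))) + F μ ν (c (i+1)) * μ {c (i+1)})
              + (n:ℝ≥0∞)⁻¹ * μ (Ioo (c i) (c (i+1))) := by
              rw [hstep i, add_mul]
              ring
          _ ≤ (ν (Ioo (c i) (c (i+1))) + ν {c (i+1)})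
              + (n:ℝ≥0∞)⁻¹ * μ (Ioc (c i) (c (i+1))) :=
              add_le_add (add_le_add (le_measure_Ioo hle hTP hlt (key1 i hi)) hatom.ge)
                (mul_le_mul_right hμIoo _)
  have hsum : ∀ m : Measure ℝ,
      m (Ioc a b) = ∑ i ∈ Finset.range n, m (Ioc (c i) (c (i+1))) := by
    intro m
    have h := sum_Ioc m hmono n
    rwa [hc0, hcn] at h
  constructor
  · calc ν (Ioc a b) = ∑ i ∈ Finset.range n, ν (Ioc (c i) (c (i+1))) := hsum ν
      _ ≤ ∑ i ∈ Finset.range n,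
          (ρ (Ioc (c i) (c (i+1))) + (n:ℝ≥0∞)⁻¹ * μ (Ioc (c i) (c (i+1)))) :=
          Finset.sum_le_sum fun i hi => (piece i (Finset.mem_range.1 hi)).1
      _ = ρ (Ioc a b) + (n:ℝ≥0∞)⁻¹ * μ (Ioc a b) := by
          rw [Finset.sum_add_distrib, ← Finset.mul_sum, ← hsum ρ, ← hsum μ]
  · calc ρ (Ioc a b) = ∑ i ∈ Finset.range n, ρ (Ioc (c i) (c (i+1))) := hsum ρ
      _ ≤ ∑ i ∈ Finset.range n,
          (ν (Ioc (c i) (c (i+1))) + (n:ℝ≥0∞)⁻¹ * μ (Ioc (c i) (c (i+1)))) :=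
          Finset.sum_le_sum fun i hi => (piece i (Finset.mem_range.1 hi)).2
      _ = ν (Ioc a b) + (n:ℝ≥0∞)⁻¹ * μ (Ioc a b) := by
          rw [Finset.sum_add_distrib, ← Finset.mul_sum, ← hsum ν, ← hsum μ]

lemma nu_eq : ν = μ.withDensity (F μ ν) := by
  have hfin : IsFiniteMeasure (μ.withDensity (F μ ν)) := by
    refine isFiniteMeasure_withDensity ?_
    have h1 : ∫⁻ x, F μ ν x ∂μ ≤ ∫⁻ _, 1 ∂μ := lintegral_mono (F_le_one hle)
    rw [lintegral_one] at h1
    exact (lt_of_le_of_lt h1 (measure_lt_top μ univ)).ne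
  refine Measure.ext_of_Ioc ν _ (fun s t hst => ?_)
  refine le_antisymm ?_ ?_
  · exact eps_le (measure_ne_top μ _) fun m hm => (key_ineq hle hTP hst m hm).1
  · exact eps_le (measure_ne_top μ _) fun m hm => (key_ineq hle hTP hst m hm).2

end TP3b


end Stmt16Aux


theorem stmt_16 (μ ν : Measure ℝ) [IsFiniteMeasure μ] [IsFiniteMeasure ν]
    (hle : ν ≤ μ)
    (hTP : ∀ x y z : ℝ, x < y → y < z →
      μ (Ioc y z) * ν (Ioc x y) ≤ μ (Ioc x y) * ν (Ioc y z)) :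
    let f : ℝ → ENNReal := fun x => ⨆ a ∈ Iio x, ν (Ioc a x) / μ (Ioc a x)
    (∀ x, f x ≤ 1) ∧ Monotone f ∧ Measurable f ∧
    (∀ B : Set ℝ, MeasurableSet B → ν B = ∫⁻ x in B, f x ∂μ) ∧
    (∀ x' x : ℝ, x' < x → μ (Ioc x' x) = 0 → f x' = f x) ∧
    (∀ x : ℝ, (∀ a : ℝ, a < x → 0 < μ (Ioc a x)) →
      Tendsto (fun a => ν (Ioc a x) / μ (Ioc a x)) (nhdsWithin x (Iio x)) (nhds (f x))) ∧
    (∀ x : ℝ, 0 < μ {x} → f x = ν {x} / μ {x}) := by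
  intro f
  have hf : f = Stmt16Aux.F μ ν := rfl
  rw [hf]
  refine ⟨Stmt16Aux.F_le_one hle, Stmt16Aux.F_mono hle hTP,
    Stmt16Aux.F_measurable hle hTP, ?_, ?_, ?_, ?_⟩
  · intro B hB
    conv_lhs => rw [Stmt16Aux.nu_eq hle hTP]
    exact withDensity_apply _ hB
  · intro x' x h h0
    exact Stmt16Aux.F_eq_of_null hle hTP h h0
  · intro x hx
    exact Stmt16Aux.part6 hle hTP x hx
  · intro x hx
    exact Stmt16Aux.part7 hle hTP x hx
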